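/- Let d ≥ 1 and define a : ℕ^d → ℂ by a(k) = (−1)^{⌊log(k₁ + ⋯ + k_d + 1)⌋}, where log is the natural logarithm and ⌊·⌋ is the integer floor. Then a has a correlation and γ_a(m) = 1 for every m ∈ ℤ^d; equivalently, the spectral measure of a is the Dirac point mass at the point (1, …, 1) ∈ 𝕋^d. -/

import Mathlib

open MeasureTheory Filter
open scoped Topology ComplexConjugate

noncomputable section

/-- The `d`-torus `𝕋^d = {z ∈ ℂ^d : |z_j| = 1 for all j}`. -/
abbrev Torus (d : ℕ) := { z : Fin d → ℂ // ∀ j, ‖z j‖ = 1 }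

/-- `z ^ m = z₁^{m₁} ⋯ z_d^{m_d}` for `z ∈ 𝕋^d` and `m ∈ ℤ^d`. -/
def zpowM {d : ℕ} (z : Torus d) (m : Fin d → ℤ) : ℂ := ∏ j, (z.1 j) ^ (m j)

/-- `|n+1| = (n₁+1) ⋯ (n_d+1)`. -/
def boxVol {d : ℕ} (n : Fin d → ℕ) : ℝ := ∏ j, ((n j : ℝ) + 1)

/-- The extension of a weight sequence `a : ℕ^d → ℂ` to `ℤ^d`, by `0` off `ℕ^d`. -/
def extZ {d : ℕ} (a : (Fin d → ℕ) → ℂ) (k : Fin d → ℤ) : ℂ :=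
  if ∀ j, 0 ≤ k j then a fun j => (k j).toNat else 0

/-- `a` has correlation `γ`. -/
def HasCorrelation {d : ℕ} (a : (Fin d → ℕ) → ℂ) (γ : (Fin d → ℤ) → ℂ) : Prop :=
  ∀ m : Fin d → ℤ,
    Tendsto
      (fun n : Fin d → ℕ =>
        ((boxVol n : ℝ) : ℂ)⁻¹ *
          ∑ k ∈ Finset.Icc (fun j => -(n j : ℤ)) (fun j => (n j : ℤ)),
            conj (extZ a k) * extZ a (k + m))
      atTop (𝓝 (γ m))

/-- `σ` is a spectral measure for `γ` : `∫_{𝕋^d} z^m dσ(z) = γ m` for all `m ∈ ℤ^d`. -/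
def IsSpectralMeasure {d : ℕ} (γ : (Fin d → ℤ) → ℂ) (σ : Measure (Torus d)) : Prop :=
  ∀ m : Fin d → ℤ, ∫ z, zpowM z m ∂σ = γ m

/- ### Auxiliary lemmas -/

open Finset Asymptotics

lemma stmt14_slice_card_le {d : ℕ} (n : Fin d → ℕ) (j : Fin d) (S : ℤ)
    (s : Finset (Fin d → ℤ)) (hs : ∀ k ∈ s, k ∈ Finset.Icc (0 : Fin d → ℤ) (fun i => (n i : ℤ))) :
    (s.filter (fun k => ∑ i, k i = S)).card ≤ ∏ i ∈ univ.erase j, (n i + 1) := by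
  classical
  have htarget : (Finset.Icc (0 : Fin d → ℤ) (Function.update (fun i => (n i : ℤ)) j 0)).card
      = ∏ i ∈ univ.erase j, (n i + 1) := by
    rw [Pi.card_Icc, ← Finset.prod_erase_mul _ _ (mem_univ j)]
    rw [Function.update_self]
    simp only [Pi.zero_apply, Int.card_Icc]
    rw [Finset.prod_congr rfl (fun i hi => by
      rw [Function.update_of_ne (Finset.ne_of_mem_erase hi)])]
    simp only [sub_zero]
    rw [Finset.prod_congr rfl (fun i _ => by omega :
      ∀ i ∈ univ.erase j, ((n i : ℤ) + 1).toNat = n i + 1)]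
    simp
  rw [← htarget]
  apply Finset.card_le_card_of_injOn (fun k => Function.update k j 0)
  · intro k hk
    simp only [Finset.mem_coe, Finset.mem_filter] at hk ⊢
    have hk' := hs k hk.1
    rw [Finset.mem_Icc] at hk' ⊢
    constructor
    · intro i
      rcases eq_or_ne i j with rfl | h
      · simp
      · simp only [Pi.zero_apply, Function.update_of_ne h]; exact hk'.1 i
    · intro i
      rcases eq_or_ne i j with rfl | h
      · simp
      · simp only [Function.update_of_ne h]; exact hk'.2 i
  · intro k hk k' hk' he
    simp only [Finset.coe_filter, Set.mem_setOf_eq] at hk hk'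
    funext i
    rcases eq_or_ne i j with rfl | h
    · have h1 : ∀ x : Fin d → ℤ, (∑ i2, x i2) = x i + ∑ i2 ∈ univ.erase i, x i2 := by
        intro x; rw [Finset.add_sum_erase _ _ (mem_univ i)]
      have hsum : ∑ i2 ∈ univ.erase i, k i2 = ∑ i2 ∈ univ.erase i, k' i2 := by
        apply Finset.sum_congr rfl
        intro i2 hi2
        have := congrFun he i2
        simpa [Function.update_of_ne (Finset.ne_of_mem_erase hi2)] using this
      have := hk.2.trans hk'.2.symm
      rw [h1 k, h1 k', hsum] at this
      omega
    · have := congrFun he i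
      simpa [Function.update_of_ne h] using this

lemma stmt14_box_card_update {d : ℕ} (n : Fin d → ℕ) (j : Fin d) (v : ℤ) :
    (Finset.Icc (0 : Fin d → ℤ) (Function.update (fun i => (n i : ℤ)) j v)).card
      = (v + 1).toNat * ∏ i ∈ univ.erase j, (n i + 1) := by
  classical
  rw [Pi.card_Icc, ← Finset.prod_erase_mul _ _ (mem_univ j)]
  rw [Function.update_self]
  simp only [Pi.zero_apply, Int.card_Icc]
  rw [Finset.prod_congr rfl (fun i hi => by
    rw [Function.update_of_ne (Finset.ne_of_mem_erase hi)])]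
  simp only [sub_zero]
  rw [Finset.prod_congr rfl (fun i _ => by omega :
    ∀ i ∈ univ.erase j, ((n i : ℤ) + 1).toNat = n i + 1)]
  ring

lemma stmt14_floor_log_ne_between {S M : ℤ} (hS : 0 ≤ S) (hSM : 0 ≤ S + M)
    (hne : ⌊Real.log ((S:ℝ) + 1)⌋ ≠ ⌊Real.log (((S:ℝ) + (M:ℝ)) + 1)⌋) :
    ∃ t : ℕ, Real.exp t ≤ (S:ℝ) + 1 + (M.natAbs:ℝ) ∧
      ⌈Real.exp t - 1 - (M.natAbs:ℝ)⌉ ≤ S ∧ S ≤ ⌊Real.exp t - 1 + (M.natAbs:ℝ)⌋ := by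
  set u : ℝ := (S:ℝ) + 1 with hu_def
  set v : ℝ := ((S:ℝ) + (M:ℝ)) + 1 with hv_def
  have hS0 : (0:ℝ) ≤ (S:ℝ) := by exact_mod_cast hS
  have hSM0 : (0:ℝ) ≤ ((S:ℝ) + (M:ℝ)) := by exact_mod_cast hSM
  have hu1 : 1 ≤ u := by rw [hu_def]; linarith
  have hv1 : 1 ≤ v := by rw [hv_def]; linarith
  have habs1 : (M:ℝ) ≤ (M.natAbs:ℝ) := by
    rw [Nat.cast_natAbs]
    push_cast
    exact le_abs_self _
  have habs2 : -(M.natAbs:ℝ) ≤ (M:ℝ) := by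
    rw [Nat.cast_natAbs]
    push_cast
    exact neg_abs_le _
  have key : ∃ t : ℤ, ((u < Real.exp t ∧ Real.exp t ≤ v) ∨ (v < Real.exp t ∧ Real.exp t ≤ u)) := by
    rcases hne.lt_or_gt with h | h
    · refine ⟨⌊Real.log v⌋, Or.inl ⟨?_, ?_⟩⟩
      · have h1 : Real.log u < (⌊Real.log v⌋ : ℝ) := by
          have := Int.lt_floor_add_one (Real.log u)
          have h2 : (⌊Real.log u⌋ : ℝ) + 1 ≤ (⌊Real.log v⌋ : ℝ) := by exact_mod_cast h
          linarith
        calc u = Real.exp (Real.log u) := (Real.exp_log (by linarith)).symm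
        _ < _ := Real.exp_lt_exp.2 h1
      · calc Real.exp _ ≤ Real.exp (Real.log v) := Real.exp_le_exp.2 (Int.floor_le _)
        _ = v := Real.exp_log (by linarith)
    · refine ⟨⌊Real.log u⌋, Or.inr ⟨?_, ?_⟩⟩
      · have h1 : Real.log v < (⌊Real.log u⌋ : ℝ) := by
          have := Int.lt_floor_add_one (Real.log v)
          have h2 : (⌊Real.log v⌋ : ℝ) + 1 ≤ (⌊Real.log u⌋ : ℝ) := by exact_mod_cast h
          linarith
        calc v = Real.exp (Real.log v) := (Real.exp_log (by linarith)).symm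
        _ < _ := Real.exp_lt_exp.2 h1
      · calc Real.exp _ ≤ Real.exp (Real.log u) := Real.exp_le_exp.2 (Int.floor_le _)
        _ = u := Real.exp_log (by linarith)
  obtain ⟨t, ht⟩ := key
  have hlow : (S:ℝ) + 1 - (M.natAbs:ℝ) < Real.exp t := by
    rcases ht with ⟨h1, _⟩ | ⟨h1, _⟩ <;> linarith
  have hhigh : Real.exp t ≤ (S:ℝ) + 1 + (M.natAbs:ℝ) := by
    rcases ht with ⟨_, h2⟩ | ⟨_, h2⟩ <;> linarith
  have ht0 : 0 ≤ t := by
    by_contra h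
    push_neg at h
    have hlt : Real.exp t < 1 := by
      rw [Real.exp_lt_one_iff]
      exact_mod_cast h
    have h1 : 1 < Real.exp t := by
      rcases ht with ⟨h1, _⟩ | ⟨h1, _⟩ <;> linarith
    linarith
  have hcast : ((t.toNat : ℕ) : ℝ) = (t:ℝ) := by exact_mod_cast Int.toNat_of_nonneg ht0
  refine ⟨t.toNat, by rw [hcast]; exact hhigh, ?_, ?_⟩
  · rw [hcast, Int.ceil_le]
    push_cast
    linarith
  · rw [hcast, Int.le_floor]
    push_cast
    linarith

lemma stmt14_box_card {d : ℕ} (n : Fin d → ℕ) :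
    (Finset.Icc (0 : Fin d → ℤ) (fun j => (n j : ℤ))).card = ∏ j, (n j + 1) := by
  rw [Pi.card_Icc]
  refine Finset.prod_congr rfl fun j _ => ?_
  rw [Int.card_Icc]
  simp only [Pi.zero_apply]
  omega

lemma stmt14_tendsto_eval {d : ℕ} (j : Fin d) :
    Tendsto (fun n : Fin d → ℕ => n j) atTop atTop :=
  tendsto_atTop_atTop.2 fun b => ⟨fun _ => b, fun _ hn => hn j⟩

lemma stmt14_tendsto_sup {d : ℕ} (hd : 1 ≤ d) :
    Tendsto (fun n : Fin d → ℕ => Finset.univ.sup n) atTop atTop := by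
  have j0 : Fin d := ⟨0, hd⟩
  exact tendsto_atTop_mono (fun n => Finset.le_sup (Finset.mem_univ j0)) (stmt14_tendsto_eval j0)

lemma stmt14_tendsto_log_aux (A B C : ℝ) (hA : 0 < A) :
    Tendsto (fun s : ℕ => (Real.log (A * s + B) + 1) * C / ((s:ℝ) + 1)) atTop (𝓝 0) := by
  apply IsLittleO.tendsto_div_nhds_zero
  simp only [mul_comm _ C]
  apply IsLittleO.const_mul_left
  apply IsLittleO.add
  · have h1 : Tendsto (fun s : ℕ => A * s + B) atTop atTop := by
      apply Tendsto.atTop_add _ tendsto_const_nhds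
      exact (tendsto_natCast_atTop_atTop).const_mul_atTop hA
    have h2 : (fun s : ℕ => Real.log (A * s + B)) =o[atTop] (fun s : ℕ => A * s + B) :=
      Real.isLittleO_log_id_atTop.comp_tendsto h1
    apply h2.trans_isBigO
    apply IsBigO.of_bound (A + |B|)
    filter_upwards [eventually_ge_atTop 0] with s _
    have hs : (0:ℝ) ≤ (s:ℝ) := Nat.cast_nonneg s
    have h3 : |A * s + B| ≤ A * s + |B| := by
      calc |A * s + B| ≤ |A * s| + |B| := abs_add_le _ _
      _ = A * s + |B| := by rw [abs_of_nonneg (by positivity)]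
    calc ‖A * s + B‖ = |A * s + B| := rfl
    _ ≤ A * s + |B| := h3
    _ ≤ (A + |B|) * ((s:ℝ) + 1) := by nlinarith [abs_nonneg B]
    _ = (A + |B|) * ‖(s:ℝ) + 1‖ := by rw [Real.norm_of_nonneg (by linarith)]
  · rw [isLittleO_const_left]
    right
    have : Tendsto (fun s : ℕ => (s:ℝ) + 1) atTop atTop :=
      tendsto_atTop_add_const_right _ 1 tendsto_natCast_atTop_atTop
    exact tendsto_abs_atTop_atTop.comp this

section extZfacts
variable {d : ℕ} {a : (Fin d → ℕ) → ℂ}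
    (ha : ∀ k : Fin d → ℕ, a k = (-1 : ℂ) ^ ⌊Real.log ((∑ j, (k j : ℝ)) + 1)⌋)

include ha

lemma stmt14_norm_extZ_le (k : Fin d → ℤ) : ‖extZ a k‖ ≤ 1 := by
  unfold extZ
  split_ifs with h
  · rw [ha, norm_zpow]
    simp
  · simp

lemma stmt14_extZ_of_nonneg (k : Fin d → ℤ) (hk : ∀ j, 0 ≤ k j) :
    extZ a k = (-1:ℂ) ^ ⌊Real.log (((∑ j, k j : ℤ) : ℝ) + 1)⌋ := by
  rw [extZ, if_pos hk, ha]
  have h1 : (∑ j, (((k j).toNat : ℕ) : ℝ)) = ((∑ j, k j : ℤ) : ℝ) := by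
    push_cast
    exact Finset.sum_congr rfl fun j _ => by
      have := Int.toNat_of_nonneg (hk j)
      exact_mod_cast congrArg (fun z : ℤ => (z : ℝ)) this
  rw [h1]

lemma stmt14_conj_extZ (k : Fin d → ℤ) :
    (starRingEnd ℂ) (extZ a k) = extZ a k := by
  unfold extZ
  split_ifs with h
  · rw [ha, map_zpow₀]
    simp
  · simp

end extZfacts


lemma stmt14_Icc_card (c : ℕ) (x : ℝ) :
    (Finset.Icc ⌈x - (c:ℝ)⌉ ⌊x + (c:ℝ)⌋).card ≤ 2*c+1 := by
  rw [Int.card_Icc]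
  have hfl : ((⌊x + (c:ℝ)⌋:ℤ) : ℝ) ≤ x + c := Int.floor_le _
  have hcl : x - (c:ℝ) ≤ ((⌈x - (c:ℝ)⌉:ℤ) : ℝ) := Int.le_ceil _
  have h5 : (⌊x + (c:ℝ)⌋:ℤ) - ⌈x - (c:ℝ)⌉ ≤ 2*(c:ℤ) := by
    have h6 : (((⌊x + (c:ℝ)⌋:ℤ) - ⌈x - (c:ℝ)⌉ : ℤ) : ℝ) ≤ 2*(c:ℝ) := by
      push_cast
      linarith
    exact_mod_cast h6
  omega

lemma stmt14_pointwise {d : ℕ} (hd : 1 ≤ d) {a : (Fin d → ℕ) → ℂ}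
    (ha : ∀ k : Fin d → ℕ, a k = (-1 : ℂ) ^ ⌊Real.log ((∑ j, (k j : ℝ)) + 1)⌋)
    (m : Fin d → ℤ) (n : Fin d → ℕ) :
    ‖((boxVol n : ℝ) : ℂ)⁻¹ * (∑ k ∈ Finset.Icc (fun j => -(n j : ℤ)) (fun j => (n j : ℤ)),
        conj (extZ a k) * extZ a (k + m)) - 1‖ ≤
      (∑ j, 2 * (((-(m j)).toNat : ℕ) : ℝ) / ((n j : ℝ) + 1)) +
        (Real.log ((d:ℝ) * ((Finset.univ.sup n : ℕ) : ℝ) + (1 + (((∑ j, m j).natAbs : ℕ) : ℝ))) + 1)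
          * (2 * (2 * (((∑ j, m j).natAbs : ℕ) : ℝ) + 1)) / (((Finset.univ.sup n : ℕ) : ℝ) + 1) := by
  classical
  set M : ℤ := ∑ j, m j with hM_def
  set c : ℕ := M.natAbs with hc_def
  set N : ℕ := ∑ j, n j with hN_def
  set T : ℕ := (⌊Real.log ((N:ℝ) + 1 + (c:ℝ))⌋).toNat with hT_def
  set badS : Finset ℤ := (Finset.range (T+1)).biUnion
    (fun t' => Finset.Icc ⌈Real.exp t' - 1 - (c:ℝ)⌉ ⌊Real.exp t' - 1 + (c:ℝ)⌋) with hbadS_def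
  set P : Finset (Fin d → ℤ) := Finset.Icc 0 (fun j => (n j : ℤ)) with hP_def
  set f : (Fin d → ℤ) → ℂ := fun k => conj (extZ a k) * extZ a (k + m) with hf_def
  have hPmem : ∀ k ∈ P, (∀ j, 0 ≤ k j) ∧ (∀ j, k j ≤ (n j : ℤ)) := by
    intro k hk
    rw [hP_def, Finset.mem_Icc] at hk
    exact ⟨fun j => hk.1 j, fun j => hk.2 j⟩
  -- sums over the big box and the positive box agree
  have hsum_eq : ∑ k ∈ Finset.Icc (fun j => -(n j : ℤ)) (fun j => (n j : ℤ)), f k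
      = ∑ k ∈ P, f k := by
    symm
    apply Finset.sum_subset
    · intro k hk
      rw [hP_def, Finset.mem_Icc] at hk
      rw [Finset.mem_Icc]
      constructor
      · intro j
        have h1 := hk.1 j
        simp only [Pi.zero_apply] at h1
        show -(n j : ℤ) ≤ k j
        omega
      · exact hk.2
    · intro k hkB hkP
      have : ¬ (∀ j, 0 ≤ k j) := by
        intro hpos
        apply hkP
        rw [hP_def, Finset.mem_Icc]
        rw [Finset.mem_Icc] at hkB
        exact ⟨fun j => hpos j, hkB.2⟩
      rw [hf_def]
      simp only [extZ, if_neg this, map_zero, zero_mul]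
  -- values of f
  have hnorm_f : ∀ k, ‖f k‖ ≤ 1 := by
    intro k
    rw [hf_def]
    simp only
    rw [norm_mul, RCLike.norm_conj]
    exact mul_le_one₀ (stmt14_norm_extZ_le ha k) (norm_nonneg _) (stmt14_norm_extZ_le ha _)
  have hgood : ∀ k, (∀ j, 0 ≤ k j) → (∀ j, 0 ≤ k j + m j) →
      ⌊Real.log (((∑ i, k i : ℤ):ℝ)+1)⌋ = ⌊Real.log ((((∑ i, k i) + M : ℤ):ℝ)+1)⌋ → f k = 1 := by
    intro k hk hkm hfl
    have h1 := stmt14_extZ_of_nonneg ha k hk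
    have h2 := stmt14_extZ_of_nonneg ha (k+m) (fun j => by simpa using hkm j)
    have h3 : (∑ i, (k+m) i) = (∑ i, k i) + M := by
      simp only [Pi.add_apply, hM_def]
      rw [Finset.sum_add_distrib]
    rw [h3] at h2
    rw [hf_def]
    simp only
    rw [stmt14_conj_extZ ha, h1, h2, ← hfl, ← mul_zpow]
    norm_num
  set bad : Finset (Fin d → ℤ) := P.filter (fun k => f k ≠ 1) with hbad_def
  set bad1 : Finset (Fin d → ℤ) := P.filter (fun k => ¬ ∀ j, 0 ≤ k j + m j) with hbad1_def
  set bad2 : Finset (Fin d → ℤ) := P.filter (fun k => (∑ i, k i) ∈ badS) with hbad2_def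
  have hsub : bad ⊆ bad1 ∪ bad2 := by
    intro k hk
    rw [hbad_def, Finset.mem_filter] at hk
    rw [Finset.mem_union, hbad1_def, hbad2_def, Finset.mem_filter, Finset.mem_filter]
    by_cases hpos : ∀ j, 0 ≤ k j + m j
    · right
      refine ⟨hk.1, ?_⟩
      have hk0 : ∀ j, 0 ≤ k j := (hPmem k hk.1).1
      have hS : 0 ≤ ∑ i, k i := Finset.sum_nonneg (fun i _ => hk0 i)
      have hSM : 0 ≤ (∑ i, k i) + M := by
        rw [hM_def, ← Finset.sum_add_distrib]
        exact Finset.sum_nonneg (fun i _ => hpos i)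
      have hne : ⌊Real.log (((∑ i, k i : ℤ):ℝ)+1)⌋ ≠
          ⌊Real.log ((((∑ i, k i : ℤ):ℝ) + (M:ℝ))+1)⌋ := by
        intro heq
        apply hk.2
        apply hgood k hk0 hpos
        rw [heq]
        congr 2
        push_cast
        ring
      obtain ⟨t', hexp, hc1, hc2⟩ := stmt14_floor_log_ne_between hS hSM hne
      rw [hbadS_def, Finset.mem_biUnion]
      refine ⟨t', ?_, Finset.mem_Icc.2 ⟨hc1, hc2⟩⟩
      rw [Finset.mem_range]
      have hSN : ((∑ i, k i : ℤ):ℝ) ≤ (N:ℝ) := by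
        have h6 : (∑ i, k i) ≤ (N : ℤ) := by
          rw [hN_def]
          push_cast
          exact Finset.sum_le_sum (fun i _ => (hPmem k hk.1).2 i)
        exact_mod_cast h6
      have hexp2 : Real.exp t' ≤ (N:ℝ) + 1 + (c:ℝ) := le_trans hexp (by linarith)
      have hlog : (t' : ℝ) ≤ Real.log ((N:ℝ)+1+(c:ℝ)) := by
        rw [Real.le_log_iff_exp_le (by positivity)]
        exact hexp2
      have hlogN0 : (0:ℝ) ≤ Real.log ((N:ℝ)+1+(c:ℝ)) := le_trans (by positivity) hlog
      have h7 : (t' : ℤ) ≤ ⌊Real.log ((N:ℝ)+1+(c:ℝ))⌋ := Int.le_floor.2 (by exact_mod_cast hlog)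
      have h8 : (t' : ℤ) ≤ (T : ℤ) := by
        rw [hT_def]
        rwa [Int.toNat_of_nonneg (Int.floor_nonneg.2 hlogN0)]
      have h9 : t' ≤ T := by exact_mod_cast h8
      omega
    · left
      exact ⟨hk.1, hpos⟩
  have hbad_card : bad.card ≤ bad1.card + bad2.card :=
    (Finset.card_le_card hsub).trans (Finset.card_union_le _ _)
  set E : Fin d → ℕ := fun j => ∏ i ∈ Finset.univ.erase j, (n i + 1) with hE_def
  have hbad1_card : bad1.card ≤ ∑ j, (-(m j)).toNat * E j := by
    have hsub1 : bad1 ⊆ Finset.univ.biUnion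
        (fun j => P.filter (fun k => k j < ((-(m j)).toNat : ℤ))) := by
      intro k hk
      rw [hbad1_def, Finset.mem_filter] at hk
      obtain ⟨hk1, hk2⟩ := hk
      push_neg at hk2
      obtain ⟨j, hj⟩ := hk2
      rw [Finset.mem_biUnion]
      refine ⟨j, Finset.mem_univ j, Finset.mem_filter.2 ⟨hk1, ?_⟩⟩
      have h10 : k j < -(m j) := by omega
      exact lt_of_lt_of_le h10 (Int.self_le_toNat _)
    refine (Finset.card_le_card hsub1).trans ((Finset.card_biUnion_le).trans ?_)
    apply Finset.sum_le_sum
    intro j _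
    have hsub2 : P.filter (fun k => k j < ((-(m j)).toNat : ℤ)) ⊆
        Finset.Icc 0 (Function.update (fun i => (n i:ℤ)) j (((-(m j)).toNat : ℤ) - 1)) := by
      intro k hk
      simp only [Finset.mem_filter] at hk
      obtain ⟨hk1, hk2⟩ := hk
      rw [Finset.mem_Icc]
      constructor
      · intro i
        exact (hPmem k hk1).1 i
      · intro i
        rcases eq_or_ne i j with rfl | hij
        · rw [Function.update_self]
          exact Int.le_sub_one_of_lt hk2
        · rw [Function.update_of_ne hij]
          exact (hPmem k hk1).2 i
    refine (Finset.card_le_card hsub2).trans ?_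
    rw [stmt14_box_card_update]
    have h8 : ((((-(m j)).toNat : ℤ)) - 1 + 1).toNat = (-(m j)).toNat := by omega
    rw [h8, hE_def]
  have hFinNe : Nonempty (Fin d) := ⟨⟨0, hd⟩⟩
  obtain ⟨jmax, -, hjmax⟩ := Finset.exists_max_image Finset.univ n Finset.univ_nonempty
  have hbad2_card : bad2.card ≤ ((T+1) * (2*c+1)) * E jmax := by
    have h1 : bad2.card ≤ (E jmax) * ((bad2.image (fun k => ∑ i, k i)).card) := by
      apply Finset.card_le_mul_card_image
      intro S _
      apply stmt14_slice_card_le n jmax S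
      intro k hk
      have hk2 : k ∈ P := (Finset.mem_filter.1 hk).1
      rwa [hP_def] at hk2
    have h2 : (bad2.image fun k => ∑ i, k i) ⊆ badS := by
      intro S hS
      rw [Finset.mem_image] at hS
      obtain ⟨k, hk, rfl⟩ := hS
      exact (Finset.mem_filter.1 hk).2
    have h3 : badS.card ≤ (T+1) * (2*c+1) := by
      rw [hbadS_def]
      refine (Finset.card_biUnion_le).trans ?_
      have h4 : ∀ t' ∈ Finset.range (T+1),
          (Finset.Icc ⌈Real.exp t' - 1 - (c:ℝ)⌉ ⌊Real.exp t' - 1 + (c:ℝ)⌋).card ≤ 2*c+1 := by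
        intro t' _
        exact stmt14_Icc_card c (Real.exp t' - 1)
      refine (Finset.sum_le_sum h4).trans ?_
      rw [Finset.sum_const, Finset.card_range, smul_eq_mul]
    calc bad2.card ≤ (E jmax) * ((bad2.image (fun k => ∑ i, k i)).card) := h1
    _ ≤ (E jmax) * badS.card := Nat.mul_le_mul_left _ (Finset.card_le_card h2)
    _ ≤ (E jmax) * ((T+1)*(2*c+1)) := Nat.mul_le_mul_left _ h3
    _ = ((T+1)*(2*c+1)) * E jmax := Nat.mul_comm _ _
  -- volume facts
  have hVpos : 0 < boxVol n := Finset.prod_pos (fun j _ => by positivity)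
  have hcardP : ((P.card : ℕ) : ℝ) = boxVol n := by
    rw [hP_def, stmt14_box_card, boxVol]
    push_cast
    ring
  have hEpos : ∀ j, (0:ℝ) < (E j : ℝ) := by
    intro j
    have : 0 < E j := Finset.prod_pos (fun i _ => by omega)
    exact_mod_cast this
  have hVj : ∀ j, boxVol n = ((n j:ℝ)+1) * (E j:ℝ) := by
    intro j
    rw [boxVol, ← Finset.prod_erase_mul _ _ (Finset.mem_univ j), hE_def]
    push_cast
    ring
  have hne0 : ((boxVol n:ℝ):ℂ) ≠ 0 := by
    rw [Ne, Complex.ofReal_eq_zero]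
    exact ne_of_gt hVpos
  -- main norm estimate
  have hstep : ‖((boxVol n : ℝ):ℂ)⁻¹ * (∑ k ∈ Finset.Icc (fun j => -(n j : ℤ)) (fun j => (n j : ℤ)),
      conj (extZ a k) * extZ a (k + m)) - 1‖ ≤ (boxVol n)⁻¹ * (2 * (bad.card:ℝ)) := by
    have hsum_eq' : (∑ k ∈ Finset.Icc (fun j => -(n j : ℤ)) (fun j => (n j : ℤ)),
        conj (extZ a k) * extZ a (k + m)) = ∑ k ∈ P, f k := hsum_eq
    rw [hsum_eq']
    have heq : ((boxVol n:ℝ):ℂ)⁻¹ * (∑ k ∈ P, f k) - 1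
        = ((boxVol n:ℝ):ℂ)⁻¹ * ((∑ k ∈ P, f k) - (P.card : ℂ)) := by
      rw [mul_sub]
      congr 1
      have hpc : ((P.card : ℕ) : ℂ) = ((boxVol n : ℝ) : ℂ) := by exact_mod_cast hcardP
      rw [hpc, inv_mul_cancel₀ hne0]
    rw [heq, norm_mul, norm_inv]
    have hnr : ‖((boxVol n:ℝ):ℂ)‖ = boxVol n := by
      rw [Complex.norm_real, Real.norm_of_nonneg hVpos.le]
    rw [hnr]
    apply mul_le_mul_of_nonneg_left _ (by positivity)
    have h4 : (∑ k ∈ P, f k) - (P.card : ℂ) = ∑ k ∈ P, (f k - 1) := by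
      rw [Finset.sum_sub_distrib, Finset.sum_const, nsmul_eq_mul, mul_one]
    rw [h4]
    refine (norm_sum_le _ _).trans ?_
    have h5 : ∀ k ∈ P, ‖f k - 1‖ ≤ if f k = 1 then 0 else 2 := by
      intro k _
      split_ifs with h
      · simp [h]
      · refine (norm_sub_le _ _).trans ?_
        have := hnorm_f k
        rw [norm_one]
        linarith
    refine (Finset.sum_le_sum h5).trans ?_
    rw [Finset.sum_ite, Finset.sum_const, Finset.sum_const, smul_zero, zero_add, nsmul_eq_mul]
    have hb' : P.filter (fun k => ¬ f k = 1) = bad := by rw [hbad_def]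
    rw [hb', mul_comm]
  refine hstep.trans ?_
  have c1 : (bad.card:ℝ) ≤ (bad1.card:ℝ) + (bad2.card:ℝ) := by exact_mod_cast hbad_card
  have c2 : (bad1.card:ℝ) ≤ ∑ j, ((-(m j)).toNat:ℝ) * (E j:ℝ) := by
    calc (bad1.card:ℝ) ≤ ((∑ j, (-(m j)).toNat * E j : ℕ) : ℝ) := by exact_mod_cast hbad1_card
    _ = ∑ j, ((-(m j)).toNat:ℝ) * (E j:ℝ) := by push_cast; ring
  have c3 : (bad2.card:ℝ) ≤ ((T:ℝ)+1)*(2*(c:ℝ)+1)*(E jmax:ℝ) := by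
    calc (bad2.card:ℝ) ≤ (((T+1)*(2*c+1)*(E jmax) : ℕ):ℝ) := by exact_mod_cast hbad2_card
    _ = ((T:ℝ)+1)*(2*(c:ℝ)+1)*(E jmax:ℝ) := by push_cast; ring
  have hterm1 : ∀ j : Fin d, (boxVol n)⁻¹ * (2 * (((-(m j)).toNat:ℝ) * (E j:ℝ)))
      = 2*(((-(m j)).toNat : ℕ):ℝ)/((n j:ℝ)+1) := by
    intro j
    rw [hVj j]
    have h9 : ((n j:ℝ)+1) ≠ 0 := by positivity
    have h10 : (E j:ℝ) ≠ 0 := ne_of_gt (hEpos j)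
    field_simp
  have hterm2 : (boxVol n)⁻¹ * (2 * (((T:ℝ)+1)*(2*(c:ℝ)+1)*(E jmax:ℝ))) ≤
      (Real.log ((d:ℝ) * ((Finset.univ.sup n : ℕ):ℝ) + (1 + (c:ℝ))) + 1) * (2*(2*(c:ℝ)+1))
        / (((Finset.univ.sup n : ℕ):ℝ)+1) := by
    rw [hVj jmax]
    have h9 : (0:ℝ) < ((n jmax:ℝ)+1) := by positivity
    have h10 := hEpos jmax
    have heq2 : (((n jmax:ℝ)+1) * (E jmax:ℝ))⁻¹ * (2 * (((T:ℝ)+1)*(2*(c:ℝ)+1)*(E jmax:ℝ)))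
        = (((T:ℝ)+1)*(2*(2*(c:ℝ)+1)))/((n jmax:ℝ)+1) := by
      field_simp
    rw [heq2]
    have hsup1 : ((Finset.univ.sup n : ℕ):ℝ) + 1 ≤ (n jmax:ℝ) + 1 := by
      have h11 : Finset.univ.sup n ≤ n jmax :=
        Finset.sup_le (fun i _ => hjmax i (Finset.mem_univ i))
      have h12 : ((Finset.univ.sup n : ℕ):ℝ) ≤ (n jmax:ℝ) := by exact_mod_cast h11
      linarith
    have hlog0 : (0:ℝ) ≤ Real.log ((d:ℝ) * ((Finset.univ.sup n : ℕ):ℝ) + (1 + (c:ℝ))) := by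
      apply Real.log_nonneg
      have h13 : (0:ℝ) ≤ (d:ℝ) * ((Finset.univ.sup n : ℕ):ℝ) := by positivity
      have h14 : (0:ℝ) ≤ (c:ℝ) := by positivity
      linarith
    have hT_le : (T:ℝ) ≤ Real.log ((d:ℝ) * ((Finset.univ.sup n : ℕ):ℝ) + (1 + (c:ℝ))) := by
      have h15 : (0:ℝ) ≤ (N:ℝ) + (c:ℝ) := by positivity
      have hx1 : (1:ℝ) ≤ (N:ℝ)+1+(c:ℝ) := by linarith
      have hlogN0 : (0:ℝ) ≤ Real.log ((N:ℝ)+1+(c:ℝ)) := Real.log_nonneg hx1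
      have hTf : (T:ℝ) = ((⌊Real.log ((N:ℝ)+1+(c:ℝ))⌋ : ℤ):ℝ) := by
        rw [hT_def]
        have h16 := Int.toNat_of_nonneg (Int.floor_nonneg.2 hlogN0)
        exact_mod_cast congrArg (fun z : ℤ => (z:ℝ)) h16
      rw [hTf]
      calc ((⌊Real.log ((N:ℝ)+1+(c:ℝ))⌋:ℤ):ℝ) ≤ Real.log ((N:ℝ)+1+(c:ℝ)) := Int.floor_le _
      _ ≤ Real.log ((d:ℝ) * ((Finset.univ.sup n : ℕ):ℝ) + (1 + (c:ℝ))) := by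
          apply Real.log_le_log (by linarith)
          have hNd : (N:ℝ) ≤ (d:ℝ) * ((Finset.univ.sup n:ℕ):ℝ) := by
            have h17 : N ≤ d * Finset.univ.sup n := by
              rw [hN_def]
              calc ∑ j, n j ≤ Finset.univ.card • Finset.univ.sup n :=
                Finset.sum_le_card_nsmul _ _ _ (fun i _ => Finset.le_sup (Finset.mem_univ i))
              _ = d * Finset.univ.sup n := by
                rw [Finset.card_univ, Fintype.card_fin, smul_eq_mul]
            exact_mod_cast h17
          linarith
    apply div_le_div₀ (by positivity) ?_ (by positivity) hsup1
    apply mul_le_mul_of_nonneg_right (by linarith) (by positivity)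
  calc (boxVol n)⁻¹ * (2 * (bad.card:ℝ))
      ≤ (boxVol n)⁻¹ * (2 * ((∑ j, ((-(m j)).toNat:ℝ) * (E j:ℝ))
          + ((T:ℝ)+1)*(2*(c:ℝ)+1)*(E jmax:ℝ))) := by
        apply mul_le_mul_of_nonneg_left _ (by positivity)
        linarith
  _ = (∑ j, (boxVol n)⁻¹ * (2 * (((-(m j)).toNat:ℝ) * (E j:ℝ))))
        + (boxVol n)⁻¹ * (2*(((T:ℝ)+1)*(2*(c:ℝ)+1)*(E jmax:ℝ))) := by
        rw [mul_add, mul_add, Finset.mul_sum, Finset.mul_sum]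
  _ ≤ _ := by
        apply add_le_add
        · apply le_of_eq
          exact Finset.sum_congr rfl (fun j _ => hterm1 j)
        · exact hterm2

/-- the sequence `a(k) = (−1)^{⌊log(k₁+⋯+k_d+1)⌋}` has a correlation with
`γ_a(m) = 1` for all `m ∈ ℤ^d`; equivalently, its spectral measure is the Dirac point
mass at `(1, …, 1) ∈ 𝕋^d`. -/
theorem statement14 {d : ℕ} (hd : 1 ≤ d)
    (a : (Fin d → ℕ) → ℂ)
    (ha : ∀ k : Fin d → ℕ, a k = (-1 : ℂ) ^ ⌊Real.log ((∑ j, (k j : ℝ)) + 1)⌋) :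
    HasCorrelation a (fun _ => 1) ∧
      IsSpectralMeasure (fun _ => (1 : ℂ))
        (Measure.dirac (⟨fun _ => 1, fun _ => norm_one⟩ : Torus d)) := by
  classical
  constructor
  · intro m
    rw [tendsto_iff_norm_sub_tendsto_zero]
    refine squeeze_zero (g := fun n : Fin d → ℕ =>
      (∑ j, 2 * (((-(m j)).toNat : ℕ) : ℝ) / ((n j : ℝ) + 1)) +
        (Real.log ((d:ℝ) * ((Finset.univ.sup n : ℕ) : ℝ) + (1 + (((∑ j, m j).natAbs : ℕ) : ℝ))) + 1)
          * (2 * (2 * (((∑ j, m j).natAbs : ℕ) : ℝ) + 1)) / (((Finset.univ.sup n : ℕ) : ℝ) + 1))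
      (fun n => norm_nonneg _) (fun n => ?_) ?_
    · exact stmt14_pointwise hd ha m n
    · rw [show (0:ℝ) = 0 + 0 by norm_num]
      apply Tendsto.add
      · rw [show (0:ℝ) = ∑ _j : Fin d, (0:ℝ) by simp]
        apply tendsto_finset_sum
        intro j _
        have hinner : Tendsto (fun x : ℕ => 2 * (((-(m j)).toNat : ℕ) : ℝ) / ((x:ℝ) + 1))
            atTop (𝓝 0) := by
          have h1 := (tendsto_const_div_atTop_nhds_zero_nat
            (2 * (((-(m j)).toNat : ℕ) : ℝ))).comp (tendsto_add_atTop_nat 1)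
          convert h1 using 2 with x
          simp only [Function.comp]
          push_cast
          ring
        exact hinner.comp (stmt14_tendsto_eval j)
      · have hA : (0:ℝ) < (d:ℝ) := by exact_mod_cast hd
        exact (stmt14_tendsto_log_aux (d:ℝ) (1 + (((∑ j, m j).natAbs : ℕ):ℝ))
          (2 * (2 * (((∑ j, m j).natAbs : ℕ):ℝ) + 1)) hA).comp (stmt14_tendsto_sup hd)
  · intro m
    rw [MeasureTheory.integral_dirac]
    simp [zpowM]

end
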